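/- There is a constant c > 0 such that for all integers m ≥ 2 and n ≥ max(m,3), each of the following three partial functions can be simulated through n-colorings by a finite simple graph with at most c·n² vertices and at most c·n³ edges: (1) the total function ch_m : S → S^m with ch_m(i) = the 0-1 vector having 1 in position i and 0 elsewhere; (2) the partial function ps_m : S^m ⇀ S defined exactly on the vectors u that equal the 0-1 vector with a single 1 in some position i, with ps_m(u) = i; (3) the partial function xp_m : S ⇀ S^m with xp_m(0) = (0,0,...,0), xp_m(1) = (1,1,...,1), and xp_m undefined on all other elements of S. -/

import Mathlib

/-- A proper `n`-coloring of a simple graph: adjacent vertices get different colors. -/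
def IsProperColoring {V : Type} (G : SimpleGraph V) {n : ℕ} (σ : V → Fin n) : Prop :=
  ∀ ⦃u v : V⦄, G.Adj u v → σ u ≠ σ v

/-- The graph `G`, with input vertices `x`, output vertices `y` and reference vertices `r`,
simulates the partial function `φ : S^p ⇀ S^q` (encoded via `Option`) through `n`-colorings,
where `S = {0,…,m-1}` is identified with the first `m` colors of `C = {0,…,n-1}`. -/
def Simulates {V : Type} (G : SimpleGraph V) (m n : ℕ) {p q : ℕ}
    (φ : (Fin p → Fin m) → Option (Fin q → Fin m))
    (x : Fin p → V) (y : Fin q → V) (r : Fin n → V) : Prop :=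
  Function.Injective r ∧
  (∃ σ : V → Fin n, IsProperColoring G σ) ∧
  (∀ σ : V → Fin n, IsProperColoring G σ → Function.Injective fun i => σ (r i)) ∧
  ∀ a : Fin p → Fin n,
    ((∃ σ : V → Fin n, IsProperColoring G σ ∧ (∀ i, σ (r i) = i) ∧ ∀ j, σ (x j) = a j) ↔
      ∃ a' : Fin p → Fin m, (∀ j, (a j : ℕ) = (a' j : ℕ)) ∧ (φ a').isSome) ∧
    (∀ σ τ : V → Fin n, IsProperColoring G σ → IsProperColoring G τ →
      (∀ i, σ (r i) = i) → (∀ i, τ (r i) = i) →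
      (∀ j, σ (x j) = a j) → (∀ j, τ (x j) = a j) → σ = τ) ∧
    (∀ σ : V → Fin n, IsProperColoring G σ → (∀ i, σ (r i) = i) → (∀ j, σ (x j) = a j) →
      ∀ (a' : Fin p → Fin m) (b : Fin q → Fin m),
        (∀ j, (a j : ℕ) = (a' j : ℕ)) → φ a' = some b →
        ∀ k, (σ (y k) : ℕ) = (b k : ℕ))

namespace S6

variable {n : ℕ} {A : Type}

/-- base relation: reference vertices form a clique; each gadget vertex `t` is
joined to the vertices in `nb t`. -/
def R (nb : A → Finset (Fin n ⊕ A)) : (Fin n ⊕ A) → (Fin n ⊕ A) → Prop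
  | .inl _, .inl _ => True
  | .inr t, w => w ∈ nb t
  | .inl _, .inr _ => False

def GG (nb : A → Finset (Fin n ⊕ A)) : SimpleGraph (Fin n ⊕ A) :=
  SimpleGraph.fromRel (R nb)

lemma adj_inl (nb : A → Finset (Fin n ⊕ A)) {i j : Fin n} (h : i ≠ j) :
    (GG nb).Adj (.inl i) (.inl j) := by
  rw [GG, SimpleGraph.fromRel_adj]
  exact ⟨by simpa using h, Or.inl trivial⟩

lemma adj_mem {nb : A → Finset (Fin n ⊕ A)} {t : A} {w : Fin n ⊕ A}
    (hw : w ∈ nb t) (hne : w ≠ .inr t) : (GG nb).Adj (.inr t) w := by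
  rw [GG, SimpleGraph.fromRel_adj]
  exact ⟨fun h => hne h.symm, Or.inl hw⟩

lemma ref_inj {nb : A → Finset (Fin n ⊕ A)} {σ : Fin n ⊕ A → Fin n}
    (hp : IsProperColoring (GG nb) σ) :
    Function.Injective fun i : Fin n => σ (.inl i) := by
  intro i j h
  by_contra hne
  exact hp (adj_inl nb hne) h

lemma proper_of {nb : A → Finset (Fin n ⊕ A)} {σ : Fin n ⊕ A → Fin n}
    (h1 : ∀ i j : Fin n, i ≠ j → σ (.inl i) ≠ σ (.inl j))
    (h2 : ∀ t : A, ∀ w ∈ nb t, σ (.inr t) ≠ σ w) :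
    IsProperColoring (GG nb) σ := by
  intro u v huv
  rw [GG, SimpleGraph.fromRel_adj] at huv
  obtain ⟨hne, h | h⟩ := huv
  · match u, v, h with
    | .inl i, .inl j, _ => exact h1 i j (by simpa using hne)
    | .inr t, w, h => exact h2 t _ h
  · match u, v, h with
    | .inl i, .inl j, _ => exact h1 i j (by simpa using hne)
    | w, .inr t, h => exact fun he => h2 t _ h he.symm

lemma force {nb : A → Finset (Fin n ⊕ A)} {σ : Fin n ⊕ A → Fin n}
    (hp : IsProperColoring (GG nb) σ) (hr : ∀ i, σ (.inl i) = i)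
    {t : A} (P : Fin n → Prop) (h : ∀ k, ¬ P k → .inl k ∈ nb t) :
    P (σ (.inr t)) := by
  by_contra hP
  have := hp (adj_mem (h _ hP) (by simp))
  rw [hr] at this
  exact this rfl

lemma force2 {nb : A → Finset (Fin n ⊕ A)} {σ : Fin n ⊕ A → Fin n}
    (hp : IsProperColoring (GG nb) σ) (hr : ∀ i, σ (.inl i) = i)
    {t : A} {c d : Fin n} (h : ∀ k, k ≠ c → k ≠ d → .inl k ∈ nb t) :
    σ (.inr t) = c ∨ σ (.inr t) = d :=
  force hp hr (fun k => k = c ∨ k = d) (by tauto)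

lemma ne_of_mem {nb : A → Finset (Fin n ⊕ A)} {σ : Fin n ⊕ A → Fin n}
    (hp : IsProperColoring (GG nb) σ) {t : A} {w : Fin n ⊕ A}
    (hw : w ∈ nb t) (hne : w ≠ .inr t) : σ (.inr t) ≠ σ w :=
  hp (adj_mem hw hne)

variable [DecidableEq A]

/-- the reference vertices whose colors are NOT in `s`. -/
def refsNot (s : Finset (Fin n)) : Finset (Fin n ⊕ A) :=
  (sᶜ).image Sum.inl

@[simp] lemma mem_refsNot_inl {s : Finset (Fin n)} {k : Fin n} :
    (Sum.inl k : Fin n ⊕ A) ∈ refsNot s ↔ k ∉ s := by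
  simp [refsNot]

@[simp] lemma mem_refsNot_inr {s : Finset (Fin n)} {t : A} :
    (Sum.inr t : Fin n ⊕ A) ∈ refsNot s ↔ False := by
  simp [refsNot]

lemma card_refsNot (s : Finset (Fin n)) : (refsNot (A := A) s).card ≤ n := by
  calc (refsNot (A := A) s).card ≤ (sᶜ).card := Finset.card_image_le
  _ ≤ (Finset.univ : Finset (Fin n)).card := Finset.card_le_card (Finset.subset_univ _)
  _ = n := by simp

lemma edge_card_le [Fintype A] (nb : A → Finset (Fin n ⊕ A)) (B : ℕ)
    (hB : ∀ t, (nb t).card ≤ B) :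
    Nat.card (GG nb).edgeSet ≤ n * n + Fintype.card A * B := by
  classical
  set f : ((Fin n × Fin n) ⊕ (Σ t : A, {w // w ∈ nb t})) → Sym2 (Fin n ⊕ A) :=
    Sum.elim (fun p => s(.inl p.1, .inl p.2)) (fun q => s(.inr q.1, q.2.1)) with hf
  have hsub : (GG nb).edgeSet ⊆ Set.range f := by
    intro e he
    induction e using Sym2.ind with
    | _ u v =>
      rw [SimpleGraph.mem_edgeSet, GG, SimpleGraph.fromRel_adj] at he
      obtain ⟨hne, h | h⟩ := he
      · match u, v, h with
        | .inl i, .inl j, _ => exact ⟨.inl (i, j), rfl⟩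
        | .inr t, w, h => exact ⟨.inr ⟨t, w, h⟩, rfl⟩
      · match u, v, h with
        | .inl i, .inl j, _ => exact ⟨.inl (j, i), Sym2.eq_swap⟩
        | w, .inr t, h => exact ⟨.inr ⟨t, w, h⟩, Sym2.eq_swap⟩
  calc Nat.card (GG nb).edgeSet ≤ Nat.card (Set.range f) :=
        Nat.card_mono (Set.toFinite _) hsub
    _ ≤ Nat.card ((Fin n × Fin n) ⊕ (Σ t : A, {w // w ∈ nb t})) := Finite.card_range_le f
    _ = n * n + ∑ t : A, (nb t).card := by
        rw [Nat.card_eq_fintype_card, Fintype.card_sum, Fintype.card_prod, Fintype.card_sigma]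
        simp [Fintype.card_coe]
    _ ≤ n * n + Fintype.card A * B := by
        gcongr
        calc ∑ t : A, (nb t).card ≤ ∑ _t : A, B := Finset.sum_le_sum (fun t _ => hB t)
          _ = Fintype.card A * B := by rw [Finset.sum_const, smul_eq_mul]; rfl

/-! ### The main gadget `D`: a graph whose proper colorings (fixing the references)
are exactly: a vertex `X` colored by some `i₀ < m`, booleans `b i = [i = i₀]`,
and all auxiliary vertices forced. -/

inductive DA (m : ℕ) : Type where
  | X : DA m
  | b (i : Fin m) : DA m
  | g (i : Fin m) : DA m
  | s1 (i : Fin m) : DA m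
  | v (i j : Fin m) : DA m
  | sc (i j : Fin m) : DA m
  | sd (i j : Fin m) : DA m
  | s2 (i j : Fin m) : DA m
deriving DecidableEq

namespace D

def em {m n : ℕ} (hmn : m ≤ n) (i : Fin m) : Fin n := Fin.castLE hmn i

@[simp] lemma em_val {m n : ℕ} (hmn : m ≤ n) (i : Fin m) : (em hmn i).val = i.val := rfl

def o0 {n : ℕ} (h3 : 3 ≤ n) : Fin n := ⟨0, by omega⟩
def o1 {n : ℕ} (h3 : 3 ≤ n) : Fin n := ⟨1, by omega⟩

@[simp] lemma o0_val {n : ℕ} (h3 : 3 ≤ n) : (o0 h3).val = 0 := rfl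
@[simp] lemma o1_val {n : ℕ} (h3 : 3 ≤ n) : (o1 h3).val = 1 := rfl

variable {m n : ℕ} (h3 : 3 ≤ n) (hmn : m ≤ n)

/-- neighbor sets of the gadget vertices. For `i ≠ j`, the triple
`v i j, sc i j, sd i j` is a "translate" gadget turning the boolean `b i`
into a vertex `v i j` colored `em i` (if `b i = 1`) or `em j` (if `b i = 0`);
`s1 i` forbids `X = em i ∧ b i = 0`; `s2 i j` forbids `b i = 1 ∧ X = em j`. -/
def nb : DA m → Finset (Fin n ⊕ DA m)
  | .X => refsNot (Finset.univ.filter (fun k : Fin n => k.val < m))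
  | .b _ => refsNot {o0 h3, o1 h3}
  | .g i => refsNot {o0 h3, o1 h3} ∪ {.inr (.b i)}
  | .s1 i =>
      if i.val = 0 then refsNot {o0 h3, o1 h3} ∪ {.inr .X, .inr (.g i)}
      else refsNot {o0 h3, em hmn i} ∪ {.inr .X, .inr (.b i)}
  | .v i j => if i = j then refsNot {o0 h3} else refsNot {em hmn j, em hmn i}
  | .sc i j =>
      if i = j then refsNot {o0 h3}
      else if j.val = 1 then
        refsNot {o0 h3, o1 h3} ∪ {.inr (.g i), .inr (.v i j)}
      else refsNot {o1 h3, em hmn j} ∪ {.inr (.b i), .inr (.v i j)}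
  | .sd i j =>
      if i = j then refsNot {o0 h3}
      else if i.val = 0 then
        refsNot {o0 h3, o1 h3} ∪ {.inr (.g i), .inr (.v i j)}
      else refsNot {o0 h3, em hmn i} ∪ {.inr (.b i), .inr (.v i j)}
  | .s2 i j =>
      if i = j then refsNot {o0 h3}
      else refsNot {em hmn j, em hmn i} ∪ {.inr .X, .inr (.v i j)}

/-- the intended coloring when `X` gets color `i₀`. -/
def Γ (i₀ : Fin m) : Fin n ⊕ DA m → Fin n
  | .inl k => k
  | .inr .X => em hmn i₀
  | .inr (.b i) => if i = i₀ then o1 h3 else o0 h3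
  | .inr (.g i) => if i = i₀ then o0 h3 else o1 h3
  | .inr (.s1 i) =>
      if i.val = 0 then (if i = i₀ then o1 h3 else o0 h3)
      else (if i = i₀ then o0 h3 else em hmn i)
  | .inr (.v i j) =>
      if i = j then o0 h3 else if i = i₀ then em hmn i else em hmn j
  | .inr (.sc i j) =>
      if i = j then o0 h3
      else if j.val = 1 then (if i = i₀ then o1 h3 else o0 h3)
      else (if i = i₀ then em hmn j else o1 h3)
  | .inr (.sd i j) =>
      if i = j then o0 h3
      else if i.val = 0 then (if i = i₀ then o1 h3 else o0 h3)
      else (if i = i₀ then o0 h3 else em hmn i)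
  | .inr (.s2 i j) =>
      if i = j then o0 h3
      else if i = i₀ then em hmn j else em hmn i

lemma union_card_le {α : Type} [DecidableEq α] (s : Finset α) (a b : α) (hs : s.card ≤ n) :
    (s ∪ {a, b}).card ≤ n + 2 :=
  le_trans (Finset.card_union_le _ _)
    (by have := Finset.card_insert_le a ({b} : Finset α); simp at this; omega)

lemma nb_card_le (t : DA m) : (nb h3 hmn t).card ≤ n + 2 := by
  have hr := fun s => card_refsNot (A := DA m) (n := n) s
  have hpair : ∀ a b : Fin n ⊕ DA m, ({a, b} : Finset (Fin n ⊕ DA m)).card ≤ 2 := by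
    intro a b
    have := Finset.card_insert_le a ({b} : Finset (Fin n ⊕ DA m))
    simp at this ⊢; omega
  have hone : ∀ a : Fin n ⊕ DA m, ({a} : Finset (Fin n ⊕ DA m)).card ≤ 2 := by simp
  have hu : ∀ (s : Finset (Fin n)) (t : Finset (Fin n ⊕ DA m)), t.card ≤ 2 →
      (refsNot (A := DA m) s ∪ t).card ≤ n + 2 := fun s t ht =>
    le_trans (Finset.card_union_le _ _) (Nat.add_le_add (hr s) ht)
  have hplain : ∀ s : Finset (Fin n), (refsNot (A := DA m) s).card ≤ n + 2 :=
    fun s => le_trans (hr s) (by omega)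
  cases t <;> simp only [nb] <;> (try split) <;> (try split) <;>
    first
      | exact hplain _
      | exact hu _ _ (hpair _ _)
      | exact hu _ _ (hone _)

section Char

variable {m n : ℕ} {h3 : 3 ≤ n} {hmn : m ≤ n} {σ : Fin n ⊕ DA m → Fin n}

lemma o0_ne_o1 : o0 h3 ≠ o1 h3 := by
  intro h
  exact absurd (congrArg Fin.val h) (by simp)

theorem char (hp : IsProperColoring (GG (nb h3 hmn)) σ)
    (hr : ∀ i, σ (.inl i) = i) :
    ∃ i₀ : Fin m, ∀ w, σ w = Γ h3 hmn i₀ w := by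
  have hXm : (σ (.inr .X)).val < m := by
    refine force hp hr (P := fun k => k.val < m) ?_
    intro k hk
    simp [nb, hk]
  refine ⟨⟨(σ (.inr .X)).val, hXm⟩, ?_⟩
  set i₀ : Fin m := ⟨(σ (.inr .X)).val, hXm⟩ with hi₀
  have hX : σ (.inr .X) = em hmn i₀ := by apply Fin.ext; rfl
  -- booleans
  have hb : ∀ i, σ (.inr (.b i)) = o0 h3 ∨ σ (.inr (.b i)) = o1 h3 := fun i => by
    refine force2 hp hr ?_
    intro k h0 h1
    simp only [nb, mem_refsNot_inl, Finset.mem_insert, Finset.mem_singleton]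
    tauto
  have hgb : ∀ i, σ (.inr (.g i)) = o0 h3 ∨ σ (.inr (.g i)) = o1 h3 := fun i => by
    refine force2 hp hr ?_
    intro k h0 h1
    simp only [nb, Finset.mem_union, mem_refsNot_inl, Finset.mem_insert, Finset.mem_singleton]
    tauto
  have hgne : ∀ i, σ (.inr (.g i)) ≠ σ (.inr (.b i)) := fun i =>
    ne_of_mem hp (by simp [nb]) (by simp)
  have hg1 : ∀ i, σ (.inr (.b i)) = o0 h3 → σ (.inr (.g i)) = o1 h3 := by
    intro i h
    rcases hgb i with h' | h'
    · exact absurd (h'.trans h.symm) (hgne i)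
    · exact h'
  have hg0 : ∀ i, σ (.inr (.b i)) = o1 h3 → σ (.inr (.g i)) = o0 h3 := by
    intro i h
    rcases hgb i with h' | h'
    · exact h'
    · exact absurd (h'.trans h.symm) (hgne i)
  -- translate pairs
  have hv : ∀ i j, i ≠ j →
      σ (.inr (.v i j)) = em hmn j ∨ σ (.inr (.v i j)) = em hmn i := fun i j hij => by
    refine force2 hp hr ?_
    intro k hjn hin
    simp only [nb, if_neg hij, mem_refsNot_inl, Finset.mem_insert, Finset.mem_singleton]
    tauto
  -- translate: b i = 1 forces v i j = em i
  have hTR1 : ∀ i j, i ≠ j → σ (.inr (.b i)) = o1 h3 →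
      σ (.inr (.v i j)) = em hmn i := by
    intro i j hij hb1
    rcases hv i j hij with hvv | hvv
    · exfalso
      by_cases hj1 : j.val = 1
      · have hscp : σ (.inr (.sc i j)) = o0 h3 ∨ σ (.inr (.sc i j)) = o1 h3 := by
          refine force2 hp hr ?_
          intro k h0 h1
          simp only [nb, if_neg hij, if_pos hj1, Finset.mem_union, mem_refsNot_inl,
            Finset.mem_insert, Finset.mem_singleton]
          tauto
        have h1 : σ (.inr (.sc i j)) ≠ σ (.inr (.g i)) :=
          ne_of_mem hp (by simp [nb, if_neg hij, if_pos hj1]) (by simp)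
        have h2 : σ (.inr (.sc i j)) ≠ σ (.inr (.v i j)) :=
          ne_of_mem hp (by simp [nb, if_neg hij, if_pos hj1]) (by simp)
        have hemj : em hmn j = o1 h3 := by apply Fin.ext; simp [hj1]
        rw [hg0 i hb1] at h1
        rw [hvv, hemj] at h2
        rcases hscp with h | h
        · exact h1 h
        · exact h2 h
      · have hscp : σ (.inr (.sc i j)) = o1 h3 ∨ σ (.inr (.sc i j)) = em hmn j := by
          refine force2 hp hr ?_
          intro k h0 h1
          simp only [nb, if_neg hij, if_neg hj1, Finset.mem_union, mem_refsNot_inl,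
            Finset.mem_insert, Finset.mem_singleton]
          tauto
        have h1 : σ (.inr (.sc i j)) ≠ σ (.inr (.b i)) :=
          ne_of_mem hp (by simp [nb, if_neg hij, if_neg hj1]) (by simp)
        have h2 : σ (.inr (.sc i j)) ≠ σ (.inr (.v i j)) :=
          ne_of_mem hp (by simp [nb, if_neg hij, if_neg hj1]) (by simp)
        rw [hb1] at h1
        rw [hvv] at h2
        rcases hscp with h | h
        · exact h1 h
        · exact h2 h
    · exact hvv
  -- translate: b i = 0 forces v i j = em j
  have hTR0 : ∀ i j, i ≠ j → σ (.inr (.b i)) = o0 h3 →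
      σ (.inr (.v i j)) = em hmn j := by
    intro i j hij hb0
    rcases hv i j hij with hvv | hvv
    · exact hvv
    · exfalso
      by_cases hi0 : i.val = 0
      · have hsdp : σ (.inr (.sd i j)) = o0 h3 ∨ σ (.inr (.sd i j)) = o1 h3 := by
          refine force2 hp hr ?_
          intro k h0 h1
          simp only [nb, if_neg hij, if_pos hi0, Finset.mem_union, mem_refsNot_inl,
            Finset.mem_insert, Finset.mem_singleton]
          tauto
        have h1 : σ (.inr (.sd i j)) ≠ σ (.inr (.g i)) :=
          ne_of_mem hp (by simp [nb, if_neg hij, if_pos hi0]) (by simp)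
        have h2 : σ (.inr (.sd i j)) ≠ σ (.inr (.v i j)) :=
          ne_of_mem hp (by simp [nb, if_neg hij, if_pos hi0]) (by simp)
        have hemi : em hmn i = o0 h3 := by apply Fin.ext; simp [hi0]
        rw [hg1 i hb0] at h1
        rw [hvv, hemi] at h2
        rcases hsdp with h | h
        · exact h2 h
        · exact h1 h
      · have hsdp : σ (.inr (.sd i j)) = o0 h3 ∨ σ (.inr (.sd i j)) = em hmn i := by
          refine force2 hp hr ?_
          intro k h0 h1
          simp only [nb, if_neg hij, if_neg hi0, Finset.mem_union, mem_refsNot_inl,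
            Finset.mem_insert, Finset.mem_singleton]
          tauto
        have h1 : σ (.inr (.sd i j)) ≠ σ (.inr (.b i)) :=
          ne_of_mem hp (by simp [nb, if_neg hij, if_neg hi0]) (by simp)
        have h2 : σ (.inr (.sd i j)) ≠ σ (.inr (.v i j)) :=
          ne_of_mem hp (by simp [nb, if_neg hij, if_neg hi0]) (by simp)
        rw [hb0] at h1
        rw [hvv] at h2
        rcases hsdp with h | h
        · exact h1 h
        · exact h2 h
  -- the boolean values
  have hb1 : σ (.inr (.b i₀)) = o1 h3 := by
    rcases hb i₀ with hbv | hbv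
    · exfalso
      by_cases hi0 : (i₀ : Fin m).val = 0
      · have hs1p : σ (.inr (.s1 i₀)) = o0 h3 ∨ σ (.inr (.s1 i₀)) = o1 h3 := by
          refine force2 hp hr ?_
          intro k h0 h1
          simp only [nb, if_pos hi0, Finset.mem_union, mem_refsNot_inl,
            Finset.mem_insert, Finset.mem_singleton]
          tauto
        have h1 : σ (.inr (.s1 i₀)) ≠ σ (.inr .X) :=
          ne_of_mem hp (by simp [nb, if_pos hi0]) (by simp)
        have h2 : σ (.inr (.s1 i₀)) ≠ σ (.inr (.g i₀)) :=
          ne_of_mem hp (by simp [nb, if_pos hi0]) (by simp)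
        have hemi : em hmn i₀ = o0 h3 := by apply Fin.ext; simpa using hi0
        rw [hX, hemi] at h1
        rw [hg1 i₀ hbv] at h2
        rcases hs1p with h | h
        · exact h1 h
        · exact h2 h
      · have hs1p : σ (.inr (.s1 i₀)) = o0 h3 ∨ σ (.inr (.s1 i₀)) = em hmn i₀ := by
          refine force2 hp hr ?_
          intro k h0 h1
          simp only [nb, if_neg hi0, Finset.mem_union, mem_refsNot_inl,
            Finset.mem_insert, Finset.mem_singleton]
          tauto
        have h1 : σ (.inr (.s1 i₀)) ≠ σ (.inr .X) :=
          ne_of_mem hp (by simp [nb, if_neg hi0]) (by simp)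
        have h2 : σ (.inr (.s1 i₀)) ≠ σ (.inr (.b i₀)) :=
          ne_of_mem hp (by simp [nb, if_neg hi0]) (by simp)
        rw [hX] at h1
        rw [hbv] at h2
        rcases hs1p with h | h
        · exact h2 h
        · exact h1 h
    · exact hbv
  have hbi : ∀ i, i ≠ i₀ → σ (.inr (.b i)) = o0 h3 := by
    intro i hne
    rcases hb i with hbv | hbv
    · exact hbv
    · exfalso
      have hvv := hTR1 i i₀ hne hbv
      have hs2p : σ (.inr (.s2 i i₀)) = em hmn i₀ ∨ σ (.inr (.s2 i i₀)) = em hmn i := by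
        refine force2 hp hr ?_
        intro k h0 h1
        simp only [nb, if_neg hne, Finset.mem_union, mem_refsNot_inl,
          Finset.mem_insert, Finset.mem_singleton]
        tauto
      have h1 : σ (.inr (.s2 i i₀)) ≠ σ (.inr .X) :=
        ne_of_mem hp (by simp [nb, if_neg hne]) (by simp)
      have h2 : σ (.inr (.s2 i i₀)) ≠ σ (.inr (.v i i₀)) :=
        ne_of_mem hp (by simp [nb, if_neg hne]) (by simp)
      rw [hX] at h1
      rw [hvv] at h2
      rcases hs2p with h | h
      · exact h1 h
      · exact h2 h
  have hball : ∀ i, σ (.inr (.b i)) = if i = i₀ then o1 h3 else o0 h3 := by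
    intro i
    by_cases hii : i = i₀
    · subst hii; simp [hb1]
    · simp [hii, hbi i hii]
  -- finish: every vertex has the intended color
  rintro (k | t)
  · simp [Γ, hr]
  cases t with
  | X => exact hX
  | b i => simpa [Γ] using hball i
  | g i =>
    show σ (.inr (.g i)) = if i = i₀ then o0 h3 else o1 h3
    by_cases hii : i = i₀
    · subst hii; simp only [if_pos rfl]; exact hg0 i₀ hb1
    · simp only [if_neg hii]; exact hg1 i (hbi i hii)
  | s1 i =>
    show σ (.inr (.s1 i)) = _
    by_cases hi0 : i.val = 0
    · have hs1p : σ (.inr (.s1 i)) = o0 h3 ∨ σ (.inr (.s1 i)) = o1 h3 := by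
        refine force2 hp hr ?_
        intro k h0 h1
        simp only [nb, if_pos hi0, Finset.mem_union, mem_refsNot_inl,
          Finset.mem_insert, Finset.mem_singleton]
        tauto
      have h1 : σ (.inr (.s1 i)) ≠ σ (.inr .X) :=
        ne_of_mem hp (by simp [nb, if_pos hi0]) (by simp)
      have h2 : σ (.inr (.s1 i)) ≠ σ (.inr (.g i)) :=
        ne_of_mem hp (by simp [nb, if_pos hi0]) (by simp)
      by_cases hii : i = i₀
      · have hemi : em hmn i₀ = o0 h3 := by apply Fin.ext; simpa using (hii ▸ hi0 : (i₀ : ℕ) = 0)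
        rw [hX, hemi] at h1
        simp only [Γ, if_pos hi0, if_pos hii]
        rcases hs1p with h | h
        · exact absurd h h1
        · exact h
      · rw [hg1 i (hbi i hii)] at h2
        simp only [Γ, if_pos hi0, if_neg hii]
        rcases hs1p with h | h
        · exact h
        · exact absurd h h2
    · have hs1p : σ (.inr (.s1 i)) = o0 h3 ∨ σ (.inr (.s1 i)) = em hmn i := by
        refine force2 hp hr ?_
        intro k h0 h1
        simp only [nb, if_neg hi0, Finset.mem_union, mem_refsNot_inl,
          Finset.mem_insert, Finset.mem_singleton]
        tauto
      have h1 : σ (.inr (.s1 i)) ≠ σ (.inr .X) :=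
        ne_of_mem hp (by simp [nb, if_neg hi0]) (by simp)
      have h2 : σ (.inr (.s1 i)) ≠ σ (.inr (.b i)) :=
        ne_of_mem hp (by simp [nb, if_neg hi0]) (by simp)
      by_cases hii : i = i₀
      · rw [hX, ← hii] at h1
        simp only [Γ, if_neg hi0, if_pos hii]
        rcases hs1p with h | h
        · exact h
        · exact absurd h h1
      · rw [hbi i hii] at h2
        simp only [Γ, if_neg hi0, if_neg hii]
        rcases hs1p with h | h
        · exact absurd h h2
        · exact h
  | v i j =>
    show σ (.inr (.v i j)) = _
    by_cases hij : i = j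
    · have : σ (.inr (.v i j)) = o0 h3 ∨ σ (.inr (.v i j)) = o0 h3 := by
        refine force2 hp hr ?_
        intro k h0 _
        simp only [nb, if_pos hij, mem_refsNot_inl, Finset.mem_singleton]
        exact h0
      simp only [Γ, if_pos hij]
      tauto
    · simp only [Γ, if_neg hij]
      by_cases hii : i = i₀
      · rw [if_pos hii]; exact hTR1 i j hij (hii ▸ hb1)
      · rw [if_neg hii]; exact hTR0 i j hij (hbi i hii)
  | sc i j =>
    show σ (.inr (.sc i j)) = _
    by_cases hij : i = j
    · have : σ (.inr (.sc i j)) = o0 h3 ∨ σ (.inr (.sc i j)) = o0 h3 := by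
        refine force2 hp hr ?_
        intro k h0 _
        simp only [nb, if_pos hij, mem_refsNot_inl, Finset.mem_singleton]
        exact h0
      simp only [Γ, if_pos hij]
      tauto
    · by_cases hj1 : j.val = 1
      · have hscp : σ (.inr (.sc i j)) = o0 h3 ∨ σ (.inr (.sc i j)) = o1 h3 := by
          refine force2 hp hr ?_
          intro k h0 h1
          simp only [nb, if_neg hij, if_pos hj1, Finset.mem_union, mem_refsNot_inl,
            Finset.mem_insert, Finset.mem_singleton]
          tauto
        have h1 : σ (.inr (.sc i j)) ≠ σ (.inr (.g i)) :=
          ne_of_mem hp (by simp [nb, if_neg hij, if_pos hj1]) (by simp)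
        simp only [Γ, if_neg hij, if_pos hj1]
        by_cases hii : i = i₀
        · rw [hg0 i (hii ▸ hb1)] at h1
          rw [if_pos hii]
          rcases hscp with h | h
          · exact absurd h h1
          · exact h
        · rw [hg1 i (hbi i hii)] at h1
          rw [if_neg hii]
          rcases hscp with h | h
          · exact h
          · exact absurd h h1
      · have hscp : σ (.inr (.sc i j)) = o1 h3 ∨ σ (.inr (.sc i j)) = em hmn j := by
          refine force2 hp hr ?_
          intro k h0 h1
          simp only [nb, if_neg hij, if_neg hj1, Finset.mem_union, mem_refsNot_inl,
            Finset.mem_insert, Finset.mem_singleton]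
          tauto
        have h1 : σ (.inr (.sc i j)) ≠ σ (.inr (.b i)) :=
          ne_of_mem hp (by simp [nb, if_neg hij, if_neg hj1]) (by simp)
        have h2 : σ (.inr (.sc i j)) ≠ σ (.inr (.v i j)) :=
          ne_of_mem hp (by simp [nb, if_neg hij, if_neg hj1]) (by simp)
        simp only [Γ, if_neg hij, if_neg hj1]
        by_cases hii : i = i₀
        · rw [(show σ (.inr (.b i)) = o1 h3 from hii ▸ hb1)] at h1
          rw [if_pos hii]
          rcases hscp with h | h
          · exact absurd h h1
          · exact h
        · rw [hTR0 i j hij (hbi i hii)] at h2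
          rw [if_neg hii]
          rcases hscp with h | h
          · exact h
          · exact absurd h h2
  | sd i j =>
    show σ (.inr (.sd i j)) = _
    by_cases hij : i = j
    · have : σ (.inr (.sd i j)) = o0 h3 ∨ σ (.inr (.sd i j)) = o0 h3 := by
        refine force2 hp hr ?_
        intro k h0 _
        simp only [nb, if_pos hij, mem_refsNot_inl, Finset.mem_singleton]
        exact h0
      simp only [Γ, if_pos hij]
      tauto
    · by_cases hi0 : i.val = 0
      · have hsdp : σ (.inr (.sd i j)) = o0 h3 ∨ σ (.inr (.sd i j)) = o1 h3 := by
          refine force2 hp hr ?_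
          intro k h0 h1
          simp only [nb, if_neg hij, if_pos hi0, Finset.mem_union, mem_refsNot_inl,
            Finset.mem_insert, Finset.mem_singleton]
          tauto
        have h1 : σ (.inr (.sd i j)) ≠ σ (.inr (.g i)) :=
          ne_of_mem hp (by simp [nb, if_neg hij, if_pos hi0]) (by simp)
        simp only [Γ, if_neg hij, if_pos hi0]
        by_cases hii : i = i₀
        · rw [hg0 i (hii ▸ hb1)] at h1
          rw [if_pos hii]
          rcases hsdp with h | h
          · exact absurd h h1
          · exact h
        · rw [hg1 i (hbi i hii)] at h1
          rw [if_neg hii]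
          rcases hsdp with h | h
          · exact h
          · exact absurd h h1
      · have hsdp : σ (.inr (.sd i j)) = o0 h3 ∨ σ (.inr (.sd i j)) = em hmn i := by
          refine force2 hp hr ?_
          intro k h0 h1
          simp only [nb, if_neg hij, if_neg hi0, Finset.mem_union, mem_refsNot_inl,
            Finset.mem_insert, Finset.mem_singleton]
          tauto
        have h1 : σ (.inr (.sd i j)) ≠ σ (.inr (.b i)) :=
          ne_of_mem hp (by simp [nb, if_neg hij, if_neg hi0]) (by simp)
        have h2 : σ (.inr (.sd i j)) ≠ σ (.inr (.v i j)) :=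
          ne_of_mem hp (by simp [nb, if_neg hij, if_neg hi0]) (by simp)
        simp only [Γ, if_neg hij, if_neg hi0]
        by_cases hii : i = i₀
        · rw [hTR1 i j hij (hii ▸ hb1)] at h2
          rw [if_pos hii]
          rcases hsdp with h | h
          · exact h
          · exact absurd h h2
        · rw [hbi i hii] at h1
          rw [if_neg hii]
          rcases hsdp with h | h
          · exact absurd h h1
          · exact h
  | s2 i j =>
    show σ (.inr (.s2 i j)) = _
    by_cases hij : i = j
    · have : σ (.inr (.s2 i j)) = o0 h3 ∨ σ (.inr (.s2 i j)) = o0 h3 := by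
        refine force2 hp hr ?_
        intro k h0 _
        simp only [nb, if_pos hij, mem_refsNot_inl, Finset.mem_singleton]
        exact h0
      simp only [Γ, if_pos hij]
      tauto
    · have hs2p : σ (.inr (.s2 i j)) = em hmn j ∨ σ (.inr (.s2 i j)) = em hmn i := by
        refine force2 hp hr ?_
        intro k h0 h1
        simp only [nb, if_neg hij, Finset.mem_union, mem_refsNot_inl,
          Finset.mem_insert, Finset.mem_singleton]
        tauto
      have h2 : σ (.inr (.s2 i j)) ≠ σ (.inr (.v i j)) :=
        ne_of_mem hp (by simp [nb, if_neg hij]) (by simp)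
      simp only [Γ, if_neg hij]
      by_cases hii : i = i₀
      · rw [hTR1 i j hij (hii ▸ hb1)] at h2
        rw [if_pos hii]
        rcases hs2p with h | h
        · exact h
        · exact absurd h h2
      · rw [hTR0 i j hij (hbi i hii)] at h2
        rw [if_neg hii]
        rcases hs2p with h | h
        · exact absurd h h2
        · exact h

end Char

section Proper

variable {m n : ℕ} {h3 : 3 ≤ n} {hmn : m ≤ n}

private lemma vne {a b : Fin n} (h : a.val ≠ b.val) : a ≠ b :=
  fun he => h (congrArg Fin.val he)

private lemma vnm {i j : Fin m} (h : ¬ i = j) : i.val ≠ j.val :=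
  fun he => h (Fin.ext he)

private lemma kne0 {k : Fin n} (h : ¬ k = o0 h3) : k.val ≠ 0 :=
  fun hv => h (Fin.ext (by simpa using hv))

private lemma kne1 {k : Fin n} (h : ¬ k = o1 h3) : k.val ≠ 1 :=
  fun hv => h (Fin.ext (by simpa using hv))

private lemma knem {k : Fin n} {i : Fin m} (h : ¬ k = em hmn i) : k.val ≠ i.val :=
  fun hv => h (Fin.ext (by simpa using hv))

theorem gamma_proper (i₀ : Fin m) :
    IsProperColoring (GG (nb h3 hmn)) (Γ h3 hmn i₀) := by
  refine proper_of (fun i j h => by simpa [Γ] using h) ?_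
  intro t w hw
  cases t with
  | X =>
    obtain k | t' := w
    · simp only [nb, mem_refsNot_inl, Finset.mem_filter, Finset.mem_univ, true_and,
        not_lt] at hw
      have := i₀.isLt
      apply vne; simp only [Γ, em_val]; omega
    · simp [nb] at hw
  | b i =>
    obtain k | t' := w
    · simp only [nb, mem_refsNot_inl, Finset.mem_insert, Finset.mem_singleton, not_or] at hw
      have h0 := kne0 hw.1
      have h1 := kne1 hw.2
      apply vne; simp only [Γ]
      by_cases hii : i = i₀
      · rw [if_pos hii]; simp; omega
      · rw [if_neg hii]; simp; omega
    · simp [nb] at hw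
  | g i =>
    obtain k | t' := w
    · simp only [nb, Finset.mem_union, mem_refsNot_inl, Finset.mem_insert,
        Finset.mem_singleton, not_or] at hw
      rcases hw with ⟨h0, h1⟩ | h
      · have h0' := kne0 h0
        have h1' := kne1 h1
        apply vne; simp only [Γ]
        by_cases hii : i = i₀
        · rw [if_pos hii]; simp; omega
        · rw [if_neg hii]; simp; omega
      · simp at h
    · simp only [nb, Finset.mem_union, mem_refsNot_inl, Finset.mem_insert,
        Finset.mem_singleton] at hw
      rcases hw with h | h
      · simp at h
      · obtain rfl : t' = DA.b i := by simpa using h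
        apply vne; simp only [Γ]
        by_cases hii : i = i₀
        · rw [if_pos hii, if_pos hii]; simp
        · rw [if_neg hii, if_neg hii]; simp
  | s1 i =>
    by_cases hi0 : i.val = 0
    · obtain k | t' := w
      · simp only [nb, if_pos hi0, Finset.mem_union, mem_refsNot_inl, Finset.mem_insert,
          Finset.mem_singleton, not_or] at hw
        rcases hw with ⟨h0, h1⟩ | h
        · have h0' := kne0 h0
          have h1' := kne1 h1
          apply vne; simp only [Γ]
          rw [if_pos hi0]
          by_cases hii : i = i₀
          · rw [if_pos hii]; simp; omega
          · rw [if_neg hii]; simp; omega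
        · simp at h
      · simp only [nb, if_pos hi0, Finset.mem_union, mem_refsNot_inl, Finset.mem_insert,
          Finset.mem_singleton] at hw
        rcases hw with h | h
        · simp at h
        rcases h with h | h
        · obtain rfl : t' = DA.X := by simpa using h
          apply vne; simp only [Γ]
          rw [if_pos hi0]
          by_cases hii : i = i₀
          · have hz : (i₀ : Fin m).val = 0 := hii ▸ hi0
            rw [if_pos hii]; simp; omega
          · have hz := vnm hii
            rw [if_neg hii]; simp; omega
        · obtain rfl : t' = DA.g i := by simpa using h
          apply vne; simp only [Γ]
          rw [if_pos hi0]
          by_cases hii : i = i₀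
          · rw [if_pos hii, if_pos hii]; simp
          · rw [if_neg hii, if_neg hii]; simp
    · obtain k | t' := w
      · simp only [nb, if_neg hi0, Finset.mem_union, mem_refsNot_inl, Finset.mem_insert,
          Finset.mem_singleton, not_or] at hw
        rcases hw with ⟨h0, h1⟩ | h
        · have h0' := kne0 h0
          have h1' := knem h1
          apply vne; simp only [Γ]
          rw [if_neg hi0]
          by_cases hii : i = i₀
          · rw [if_pos hii]; simp; omega
          · rw [if_neg hii]; simp; omega
        · simp at h
      · simp only [nb, if_neg hi0, Finset.mem_union, mem_refsNot_inl, Finset.mem_insert,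
          Finset.mem_singleton] at hw
        rcases hw with h | h
        · simp at h
        rcases h with h | h
        · obtain rfl : t' = DA.X := by simpa using h
          apply vne; simp only [Γ]
          rw [if_neg hi0]
          by_cases hii : i = i₀
          · have hz : ¬ (i₀ : Fin m).val = 0 := hii ▸ hi0
            rw [if_pos hii]; simp; omega
          · have hz := vnm hii
            rw [if_neg hii]; simp; omega
        · obtain rfl : t' = DA.b i := by simpa using h
          apply vne; simp only [Γ]
          rw [if_neg hi0]
          by_cases hii : i = i₀
          · rw [if_pos hii, if_pos hii]; simp
          · rw [if_neg hii, if_neg hii]; simp; omega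
  | v i j =>
    by_cases hij : i = j
    · obtain k | t' := w
      · simp only [nb, if_pos hij, mem_refsNot_inl, Finset.mem_singleton] at hw
        have h0' := kne0 hw
        apply vne; simp only [Γ]
        rw [if_pos hij]; simp; omega
      · simp [nb, if_pos hij] at hw
    · obtain k | t' := w
      · simp only [nb, if_neg hij, mem_refsNot_inl, Finset.mem_insert,
          Finset.mem_singleton, not_or] at hw
        have h0' := knem hw.1
        have h1' := knem hw.2
        apply vne; simp only [Γ]
        rw [if_neg hij]
        by_cases hii : i = i₀
        · rw [if_pos hii]; simp; omega
        · rw [if_neg hii]; simp; omega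
      · simp [nb, if_neg hij] at hw
  | sc i j =>
    by_cases hij : i = j
    · obtain k | t' := w
      · simp only [nb, if_pos hij, mem_refsNot_inl, Finset.mem_singleton] at hw
        have h0' := kne0 hw
        apply vne; simp only [Γ]
        rw [if_pos hij]; simp; omega
      · simp [nb, if_pos hij] at hw
    · have hijv := vnm hij
      by_cases hj1 : j.val = 1
      · obtain k | t' := w
        · simp only [nb, if_neg hij, if_pos hj1, Finset.mem_union, mem_refsNot_inl,
            Finset.mem_insert, Finset.mem_singleton, not_or] at hw
          rcases hw with ⟨h0, h1⟩ | h
          · have h0' := kne0 h0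
            have h1' := kne1 h1
            apply vne; simp only [Γ]
            rw [if_neg hij, if_pos hj1]
            by_cases hii : i = i₀
            · rw [if_pos hii]; simp; omega
            · rw [if_neg hii]; simp; omega
          · simp at h
        · simp only [nb, if_neg hij, if_pos hj1, Finset.mem_union, mem_refsNot_inl,
            Finset.mem_insert, Finset.mem_singleton] at hw
          rcases hw with h | h
          · simp at h
          rcases h with h | h
          · obtain rfl : t' = DA.g i := by simpa using h
            apply vne; simp only [Γ]
            rw [if_neg hij, if_pos hj1]
            by_cases hii : i = i₀
            · rw [if_pos hii, if_pos hii]; simp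
            · rw [if_neg hii, if_neg hii]; simp
          · obtain rfl : t' = DA.v i j := by simpa using h
            apply vne; simp only [Γ]
            rw [if_neg hij, if_pos hj1, if_neg hij]
            by_cases hii : i = i₀
            · rw [if_pos hii, if_pos hii]; simp; omega
            · rw [if_neg hii, if_neg hii]; simp; omega
      · obtain k | t' := w
        · simp only [nb, if_neg hij, if_neg hj1, Finset.mem_union, mem_refsNot_inl,
            Finset.mem_insert, Finset.mem_singleton, not_or] at hw
          rcases hw with ⟨h0, h1⟩ | h
          · have h0' := kne1 h0
            have h1' := knem h1
            apply vne; simp only [Γ]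
            rw [if_neg hij, if_neg hj1]
            by_cases hii : i = i₀
            · rw [if_pos hii]; simp; omega
            · rw [if_neg hii]; simp; omega
          · simp at h
        · simp only [nb, if_neg hij, if_neg hj1, Finset.mem_union, mem_refsNot_inl,
            Finset.mem_insert, Finset.mem_singleton] at hw
          rcases hw with h | h
          · simp at h
          rcases h with h | h
          · obtain rfl : t' = DA.b i := by simpa using h
            apply vne; simp only [Γ]
            rw [if_neg hij, if_neg hj1]
            by_cases hii : i = i₀
            · rw [if_pos hii, if_pos hii]; simp; omega
            · rw [if_neg hii, if_neg hii]; simp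
          · obtain rfl : t' = DA.v i j := by simpa using h
            apply vne; simp only [Γ]
            rw [if_neg hij, if_neg hj1, if_neg hij]
            by_cases hii : i = i₀
            · rw [if_pos hii, if_pos hii]; simp; omega
            · rw [if_neg hii, if_neg hii]; simp; omega
  | sd i j =>
    by_cases hij : i = j
    · obtain k | t' := w
      · simp only [nb, if_pos hij, mem_refsNot_inl, Finset.mem_singleton] at hw
        have h0' := kne0 hw
        apply vne; simp only [Γ]
        rw [if_pos hij]; simp; omega
      · simp [nb, if_pos hij] at hw
    · have hijv := vnm hij
      by_cases hi0 : i.val = 0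
      · obtain k | t' := w
        · simp only [nb, if_neg hij, if_pos hi0, Finset.mem_union, mem_refsNot_inl,
            Finset.mem_insert, Finset.mem_singleton, not_or] at hw
          rcases hw with ⟨h0, h1⟩ | h
          · have h0' := kne0 h0
            have h1' := kne1 h1
            apply vne; simp only [Γ]
            rw [if_neg hij, if_pos hi0]
            by_cases hii : i = i₀
            · rw [if_pos hii]; simp; omega
            · rw [if_neg hii]; simp; omega
          · simp at h
        · simp only [nb, if_neg hij, if_pos hi0, Finset.mem_union, mem_refsNot_inl,
            Finset.mem_insert, Finset.mem_singleton] at hw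
          rcases hw with h | h
          · simp at h
          rcases h with h | h
          · obtain rfl : t' = DA.g i := by simpa using h
            apply vne; simp only [Γ]
            rw [if_neg hij, if_pos hi0]
            by_cases hii : i = i₀
            · rw [if_pos hii, if_pos hii]; simp
            · rw [if_neg hii, if_neg hii]; simp
          · obtain rfl : t' = DA.v i j := by simpa using h
            apply vne; simp only [Γ]
            rw [if_neg hij, if_pos hi0, if_neg hij]
            by_cases hii : i = i₀
            · rw [if_pos hii, if_pos hii]; simp; omega
            · rw [if_neg hii, if_neg hii]; simp; omega
      · obtain k | t' := w
        · simp only [nb, if_neg hij, if_neg hi0, Finset.mem_union, mem_refsNot_inl,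
            Finset.mem_insert, Finset.mem_singleton, not_or] at hw
          rcases hw with ⟨h0, h1⟩ | h
          · have h0' := kne0 h0
            have h1' := knem h1
            apply vne; simp only [Γ]
            rw [if_neg hij, if_neg hi0]
            by_cases hii : i = i₀
            · rw [if_pos hii]; simp; omega
            · rw [if_neg hii]; simp; omega
          · simp at h
        · simp only [nb, if_neg hij, if_neg hi0, Finset.mem_union, mem_refsNot_inl,
            Finset.mem_insert, Finset.mem_singleton] at hw
          rcases hw with h | h
          · simp at h
          rcases h with h | h
          · obtain rfl : t' = DA.b i := by simpa using h
            apply vne; simp only [Γ]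
            rw [if_neg hij, if_neg hi0]
            by_cases hii : i = i₀
            · rw [if_pos hii, if_pos hii]; simp
            · rw [if_neg hii, if_neg hii]; simp; omega
          · obtain rfl : t' = DA.v i j := by simpa using h
            apply vne; simp only [Γ]
            rw [if_neg hij, if_neg hi0, if_neg hij]
            by_cases hii : i = i₀
            · rw [if_pos hii, if_pos hii]; simp; omega
            · rw [if_neg hii, if_neg hii]; simp; omega
  | s2 i j =>
    by_cases hij : i = j
    · obtain k | t' := w
      · simp only [nb, if_pos hij, mem_refsNot_inl, Finset.mem_singleton] at hw
        have h0' := kne0 hw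
        apply vne; simp only [Γ]
        rw [if_pos hij]; simp; omega
      · simp [nb, if_pos hij] at hw
    · have hijv := vnm hij
      obtain k | t' := w
      · simp only [nb, if_neg hij, Finset.mem_union, mem_refsNot_inl,
          Finset.mem_insert, Finset.mem_singleton, not_or] at hw
        rcases hw with ⟨h0, h1⟩ | h
        · have h0' := knem h0
          have h1' := knem h1
          apply vne; simp only [Γ]
          rw [if_neg hij]
          by_cases hii : i = i₀
          · rw [if_pos hii]; simp; omega
          · rw [if_neg hii]; simp; omega
        · simp at h
      · simp only [nb, if_neg hij, Finset.mem_union, mem_refsNot_inl,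
          Finset.mem_insert, Finset.mem_singleton] at hw
        rcases hw with h | h
        · simp at h
        rcases h with h | h
        · obtain rfl : t' = DA.X := by simpa using h
          apply vne; simp only [Γ]
          rw [if_neg hij]
          by_cases hii : i = i₀
          · have hji : ¬ j = i₀ := fun he => hij (hii.trans he.symm)
            have := vnm hji
            rw [if_pos hii]; simp; omega
          · have := vnm hii
            rw [if_neg hii]; simp; omega
        · obtain rfl : t' = DA.v i j := by simpa using h
          apply vne; simp only [Γ]
          rw [if_neg hij, if_neg hij]
          by_cases hii : i = i₀
          · rw [if_pos hii, if_pos hii]; simp; omega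
          · rw [if_neg hii, if_neg hii]; simp; omega

end Proper

end D

namespace DC

def fD {m : ℕ} (hm : 2 ≤ m) : DA m → Fin 8 × Fin m × Fin m
  | .X => (⟨0, by omega⟩, ⟨0, Nat.lt_of_lt_of_le (by decide) hm⟩, ⟨0, Nat.lt_of_lt_of_le (by decide) hm⟩)
  | .b i => (⟨1, by omega⟩, i, ⟨0, Nat.lt_of_lt_of_le (by decide) hm⟩)
  | .g i => (⟨2, by omega⟩, i, ⟨0, Nat.lt_of_lt_of_le (by decide) hm⟩)
  | .s1 i => (⟨3, by omega⟩, i, ⟨0, Nat.lt_of_lt_of_le (by decide) hm⟩)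
  | .v i j => (⟨4, by omega⟩, i, j)
  | .sc i j => (⟨5, by omega⟩, i, j)
  | .sd i j => (⟨6, by omega⟩, i, j)
  | .s2 i j => (⟨7, by omega⟩, i, j)

def gD {m : ℕ} : Fin 8 × Fin m × Fin m → DA m := fun p =>
  match p.1.val with
  | 0 => .X
  | 1 => .b p.2.1
  | 2 => .g p.2.1
  | 3 => .s1 p.2.1
  | 4 => .v p.2.1 p.2.2
  | 5 => .sc p.2.1 p.2.2
  | 6 => .sd p.2.1 p.2.2
  | _ => .s2 p.2.1 p.2.2

lemma fD_inj {m : ℕ} (hm : 2 ≤ m) : Function.Injective (fD hm) :=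
  Function.LeftInverse.injective (g := gD) (fun a => by cases a <;> rfl)

noncomputable def fintypeDA {m : ℕ} (hm : 2 ≤ m) : Fintype (DA m) :=
  Fintype.ofInjective (fD hm) (fD_inj hm)

lemma card_DA {m : ℕ} (hm : 2 ≤ m) : @Fintype.card (DA m) (fintypeDA hm) ≤ 8 * (m * m) := by
  have := @Fintype.card_le_of_injective _ _ (fintypeDA hm) _ (fD hm) (fD_inj hm)
  simpa [mul_assoc] using this

end DC

/-! ### The `xp` gadget -/

inductive XA (m : ℕ) : Type where
  | x : XA m
  | z : XA m
  | w (k : Fin m) : XA m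
deriving DecidableEq

namespace X

open D

variable {m n : ℕ}

def nbX (h3 : 3 ≤ n) : XA m → Finset (Fin n ⊕ XA m)
  | .x => refsNot {o0 h3, o1 h3}
  | .z => refsNot {o0 h3, o1 h3} ∪ {.inr .x}
  | .w _ => refsNot {o0 h3, o1 h3} ∪ {.inr .z}

def ΓX (h3 : 3 ≤ n) (t : Bool) : Fin n ⊕ XA m → Fin n
  | .inl k => k
  | .inr .x => if t then o1 h3 else o0 h3
  | .inr .z => if t then o0 h3 else o1 h3
  | .inr (.w _) => if t then o1 h3 else o0 h3

variable {h3 : 3 ≤ n} {σ : Fin n ⊕ XA m → Fin n}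

theorem charX (hp : IsProperColoring (GG (nbX h3)) σ)
    (hr : ∀ i, σ (.inl i) = i) :
    ∃ t : Bool, ∀ w, σ w = ΓX h3 t w := by
  have hx : σ (.inr .x) = o0 h3 ∨ σ (.inr .x) = o1 h3 := by
    refine force2 hp hr ?_
    intro k h0 h1
    simp only [nbX, mem_refsNot_inl, Finset.mem_insert, Finset.mem_singleton]
    tauto
  have hz : σ (.inr .z) = o0 h3 ∨ σ (.inr .z) = o1 h3 := by
    refine force2 hp hr ?_
    intro k h0 h1
    simp only [nbX, Finset.mem_union, mem_refsNot_inl, Finset.mem_insert,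
      Finset.mem_singleton]
    tauto
  have hw : ∀ k : Fin m, σ (.inr (.w k)) = o0 h3 ∨ σ (.inr (.w k)) = o1 h3 := fun k => by
    refine force2 hp hr ?_
    intro k' h0 h1
    simp only [nbX, Finset.mem_union, mem_refsNot_inl, Finset.mem_insert,
      Finset.mem_singleton]
    tauto
  have hzx : σ (.inr .z) ≠ σ (.inr .x) :=
    ne_of_mem hp (by simp [nbX]) (by simp)
  have hwz : ∀ k : Fin m, σ (.inr (.w k)) ≠ σ (.inr .z) := fun k =>
    ne_of_mem hp (by simp [nbX]) (by simp)
  refine ⟨decide (σ (.inr .x) = o1 h3), ?_⟩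
  by_cases ht : σ (.inr .x) = o1 h3
  · have hz0 : σ (.inr .z) = o0 h3 := by
      rcases hz with h | h
      · exact h
      · exact absurd (h.trans ht.symm) hzx
    have hw0 : ∀ k : Fin m, σ (.inr (.w k)) = o1 h3 := by
      intro k
      rcases hw k with h | h
      · exact absurd (h.trans hz0.symm) (hwz k)
      · exact h
    rintro (k | t')
    · simpa [ΓX] using hr k
    cases t' <;> simp [ΓX, ht, hz0, hw0]
  · have hx0 : σ (.inr .x) = o0 h3 := hx.resolve_right ht
    have hz0 : σ (.inr .z) = o1 h3 := by
      rcases hz with h | h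
      · exact absurd (h.trans hx0.symm) hzx
      · exact h
    have hw0 : ∀ k : Fin m, σ (.inr (.w k)) = o0 h3 := by
      intro k
      rcases hw k with h | h
      · exact h
      · exact absurd (h.trans hz0.symm) (hwz k)
    rintro (k | t')
    · simpa [ΓX] using hr k
    cases t' <;> simp [ΓX, ht, hx0, hz0, hw0, o0_ne_o1]

theorem gammaX_proper (t : Bool) :
    IsProperColoring (GG (nbX h3)) (ΓX h3 t (m := m)) := by
  refine proper_of (fun i j h => by simpa [ΓX] using h) ?_
  intro u w hw
  have hne01 : (o0 h3).val ≠ (o1 h3).val := by simp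
  cases u with
  | x =>
    obtain k | t' := w
    · simp only [nbX, mem_refsNot_inl, Finset.mem_insert, Finset.mem_singleton, not_or] at hw
      have h0 := kne0 hw.1
      have h1 := kne1 hw.2
      cases t <;> (apply vne; simp [ΓX]; omega)
    · simp [nbX] at hw
  | z =>
    obtain k | t' := w
    · simp only [nbX, Finset.mem_union, mem_refsNot_inl, Finset.mem_insert,
        Finset.mem_singleton, not_or] at hw
      rcases hw with ⟨h0', h1'⟩ | h
      · have h0 := kne0 h0'
        have h1 := kne1 h1'
        cases t <;> (apply vne; simp [ΓX]; omega)
      · simp at h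
    · simp only [nbX, Finset.mem_union, mem_refsNot_inl, Finset.mem_insert,
        Finset.mem_singleton] at hw
      rcases hw with h | h
      · simp at h
      · obtain rfl : t' = XA.x := by simpa using h
        cases t <;> (apply vne; simp [ΓX])
  | w k0 =>
    obtain k | t' := w
    · simp only [nbX, Finset.mem_union, mem_refsNot_inl, Finset.mem_insert,
        Finset.mem_singleton, not_or] at hw
      rcases hw with ⟨h0', h1'⟩ | h
      · have h0 := kne0 h0'
        have h1 := kne1 h1'
        cases t <;> (apply vne; simp [ΓX]; omega)
      · simp at h
    · simp only [nbX, Finset.mem_union, mem_refsNot_inl, Finset.mem_insert,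
        Finset.mem_singleton] at hw
      rcases hw with h | h
      · simp at h
      · obtain rfl : t' = XA.z := by simpa using h
        cases t <;> (apply vne; simp [ΓX])

lemma nbX_card_le (t : XA m) : (nbX (n := n) h3 t).card ≤ n + 2 := by
  have hr := fun s => card_refsNot (A := XA m) (n := n) s
  have hone : ∀ a : Fin n ⊕ XA m, ({a} : Finset (Fin n ⊕ XA m)).card ≤ 2 := by simp
  have hu : ∀ (s : Finset (Fin n)) (t : Finset (Fin n ⊕ XA m)), t.card ≤ 2 →
      (refsNot (A := XA m) s ∪ t).card ≤ n + 2 := fun s t ht =>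
    le_trans (Finset.card_union_le _ _) (Nat.add_le_add (hr s) ht)
  cases t <;> simp only [nbX] <;>
    first
      | exact le_trans (hr _) (by omega)
      | exact hu _ _ (hone _)

end X

namespace XC

def fX {m : ℕ} (hm : 2 ≤ m) : XA m → Fin 3 × Fin m
  | .x => (⟨0, by omega⟩, ⟨0, Nat.lt_of_lt_of_le (by decide) hm⟩)
  | .z => (⟨1, by omega⟩, ⟨0, Nat.lt_of_lt_of_le (by decide) hm⟩)
  | .w k => (⟨2, by omega⟩, k)

def gX {m : ℕ} : Fin 3 × Fin m → XA m := fun p =>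
  match p.1.val with
  | 0 => .x
  | 1 => .z
  | _ => .w p.2

lemma fX_inj {m : ℕ} (hm : 2 ≤ m) : Function.Injective (fX hm) :=
  Function.LeftInverse.injective (g := gX) (fun a => by cases a <;> rfl)

noncomputable def fintypeXA {m : ℕ} (hm : 2 ≤ m) : Fintype (XA m) :=
  Fintype.ofInjective (fX hm) (fX_inj hm)

lemma card_XA {m : ℕ} (hm : 2 ≤ m) : @Fintype.card (XA m) (fintypeXA hm) ≤ 3 * m := by
  have := @Fintype.card_le_of_injective _ _ (fintypeXA hm) _ (fX hm) (fX_inj hm)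
  simpa using this

end XC

open D X

section Sim

variable {m n : ℕ} (hm : 2 ≤ m) (h3 : 3 ≤ n) (hmn : m ≤ n)

lemma sim_ch :
    Simulates (GG (D.nb h3 hmn)) m n
      (fun a : Fin 1 → Fin m => some fun i : Fin m =>
        if (i : ℕ) = (a 0 : ℕ) then (⟨1, by omega⟩ : Fin m) else ⟨0, by omega⟩)
      (fun _ => .inr .X) (fun i => .inr (.b i)) .inl := by
  refine ⟨fun a b h => by simpa using h,
    ⟨Γ h3 hmn ⟨0, by omega⟩, gamma_proper _⟩,
    fun σ hp => ref_inj hp, fun a => ⟨?_, ?_, ?_⟩⟩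
  · constructor
    · rintro ⟨σ, hp, hrefs, hx⟩
      obtain ⟨i₀, hΓ⟩ := char hp hrefs
      refine ⟨fun _ => i₀, ?_, by simp⟩
      intro j
      rw [← hx j, hΓ (.inr .X)]
      rfl
    · rintro ⟨a', ha', -⟩
      refine ⟨Γ h3 hmn (a' 0), gamma_proper _, fun i => rfl, ?_⟩
      intro j
      have hj : j = 0 := Subsingleton.elim j 0
      subst hj
      exact Fin.ext (by simpa [Γ, D.em] using (ha' 0).symm)
  · intro σ τ hpσ hpτ hrσ hrτ hxσ hxτ
    obtain ⟨i₀, hσ⟩ := char hpσ hrσ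
    obtain ⟨i₁, hτ⟩ := char hpτ hrτ
    have hii : i₀ = i₁ := by
      apply Fin.ext
      have e1 : D.em hmn i₀ = a 0 := (hσ (.inr .X)).symm.trans (hxσ 0)
      have e2 : D.em hmn i₁ = a 0 := (hτ (.inr .X)).symm.trans (hxτ 0)
      calc (i₀ : ℕ) = ((D.em hmn i₀ : Fin n) : ℕ) := rfl
        _ = ((a 0 : Fin n) : ℕ) := by rw [e1]
        _ = ((D.em hmn i₁ : Fin n) : ℕ) := by rw [e2]
        _ = (i₁ : ℕ) := rfl
    subst hii
    funext w
    rw [hσ w, hτ w]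
  · intro σ hp hrefs hx a' b ha' hb k
    obtain ⟨i₀, hσ⟩ := char hp hrefs
    have hi : (i₀ : ℕ) = (a' 0 : ℕ) := by
      have e1 : D.em hmn i₀ = a 0 := (hσ (.inr .X)).symm.trans (hx 0)
      calc (i₀ : ℕ) = ((D.em hmn i₀ : Fin n) : ℕ) := rfl
        _ = ((a 0 : Fin n) : ℕ) := by rw [e1]
        _ = (a' 0 : ℕ) := ha' 0
    have hbk := (Option.some.inj hb).symm
    rw [hσ (.inr (.b k)), hbk]
    simp only [Γ]
    by_cases hk : k = i₀
    · rw [if_pos hk]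
      have hkk : (k : ℕ) = (a' 0 : ℕ) := by rw [hk]; exact hi
      simp [hkk]
    · rw [if_neg hk]
      have hkk : (k : ℕ) ≠ (a' 0 : ℕ) := by
        rw [← hi]; exact fun he => hk (Fin.ext he)
      simp [hkk]

include hm in
lemma sim_ps :
    Simulates (GG (D.nb h3 hmn)) m n
      (fun u : Fin m → Fin m =>
        if h : ∃ i : Fin m, ∀ j : Fin m, (u j : ℕ) = if j = i then 1 else 0 then
          some fun _ : Fin 1 => h.choose
        else none)
      (fun j => .inr (.b j)) (fun _ => .inr .X) .inl := by
  refine ⟨fun a b h => by simpa using h,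
    ⟨Γ h3 hmn ⟨0, by omega⟩, gamma_proper _⟩,
    fun σ hp => ref_inj hp, fun a => ⟨?_, ?_, ?_⟩⟩
  · constructor
    · rintro ⟨σ, hp, hrefs, hx⟩
      obtain ⟨i₀, hΓ⟩ := char hp hrefs
      refine ⟨fun j => if j = i₀ then (⟨1, by omega⟩ : Fin m) else ⟨0, by omega⟩, ?_, ?_⟩
      · intro j
        rw [← hx j, hΓ (.inr (.b j))]
        by_cases hj : j = i₀ <;> simp [Γ, hj]
      · have hcond : ∃ i : Fin m, ∀ j : Fin m,
            (((fun j => if j = i₀ then (⟨1, by omega⟩ : Fin m) else ⟨0, by omega⟩) j : Fin m) : ℕ)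
              = if j = i then 1 else 0 := by
          refine ⟨i₀, fun j => ?_⟩
          by_cases hj : j = i₀ <;> simp [hj]
        dsimp only
        rw [dif_pos hcond]
        rfl
    · rintro ⟨a', ha', hsome⟩
      by_cases hcond : ∃ i : Fin m, ∀ j : Fin m, (a' j : ℕ) = if j = i then 1 else 0
      · obtain ⟨i, hi⟩ := hcond
        refine ⟨Γ h3 hmn i, gamma_proper _, fun _ => rfl, ?_⟩
        intro j
        apply Fin.ext
        show ((if j = i then o1 h3 else o0 h3) : Fin n).val = (a j).val
        rw [ha' j, hi j]
        by_cases hj : j = i <;> simp [hj]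
      · dsimp only at hsome
        rw [dif_neg hcond] at hsome
        simp at hsome
  · intro σ τ hpσ hpτ hrσ hrτ hxσ hxτ
    obtain ⟨i₀, hσ⟩ := char hpσ hrσ
    obtain ⟨i₁, hτ⟩ := char hpτ hrτ
    have hii : i₀ = i₁ := by
      by_contra hne
      have e1 := (hσ (.inr (.b i₀))).symm.trans (hxσ i₀)
      have e2 := (hτ (.inr (.b i₀))).symm.trans (hxτ i₀)
      rw [← e2] at e1
      simp only [Γ, if_pos rfl, if_neg hne] at e1
      exact o0_ne_o1 (h3 := h3) e1.symm
    subst hii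
    funext w
    rw [hσ w, hτ w]
  · intro σ hp hrefs hx a' b ha' hb k
    obtain ⟨i₀, hσ⟩ := char hp hrefs
    have hcond : ∃ i : Fin m, ∀ j : Fin m, (a' j : ℕ) = if j = i then 1 else 0 := by
      by_contra hc
      dsimp only at hb
      rw [dif_neg hc] at hb
      exact absurd hb (by simp)
    dsimp only at hb
    rw [dif_pos hcond] at hb
    have hbe := (Option.some.inj hb).symm
    have hval : ∀ j : Fin m, (a' j : ℕ) = if j = i₀ then 1 else 0 := by
      intro j
      rw [← ha' j, ← hx j, hσ (.inr (.b j))]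
      by_cases hj : j = i₀ <;> simp [Γ, hj]
    have hch : i₀ = hcond.choose := by
      by_contra hne
      have h1 := hcond.choose_spec i₀
      have h2 := hval i₀
      rw [if_neg hne] at h1
      rw [if_pos rfl] at h2
      omega
    rw [hσ (.inr .X), hbe]
    show (i₀ : ℕ) = (hcond.choose : ℕ)
    rw [hch]

lemma sim_xp :
    Simulates (GG (X.nbX (m := m) h3)) m n
      (fun a : Fin 1 → Fin m =>
        if (a 0 : ℕ) = 0 then some fun _ : Fin m => (⟨0, by omega⟩ : Fin m)
        else if (a 0 : ℕ) = 1 then some fun _ : Fin m => (⟨1, by omega⟩ : Fin m)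
        else none)
      (fun _ => .inr .x) (fun k => .inr (.w k)) .inl := by
  refine ⟨fun a b h => by simpa using h,
    ⟨ΓX h3 false, gammaX_proper _⟩,
    fun σ hp => ref_inj hp, fun a => ⟨?_, ?_, ?_⟩⟩
  · constructor
    · rintro ⟨σ, hp, hrefs, hx⟩
      obtain ⟨t, hΓ⟩ := charX hp hrefs
      refine ⟨fun _ => if t then (⟨1, by omega⟩ : Fin m) else ⟨0, by omega⟩, ?_, ?_⟩
      · intro j
        rw [← hx j, hΓ (.inr .x)]
        cases t <;> simp [ΓX]
      · cases t <;> simp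
    · rintro ⟨a', ha', hsome⟩
      by_cases h0 : (a' 0 : ℕ) = 0
      · refine ⟨ΓX h3 false, gammaX_proper _, fun _ => rfl, ?_⟩
        intro j
        have hj : j = 0 := Subsingleton.elim j 0
        subst hj
        apply Fin.ext
        show (o0 h3).val = (a 0).val
        rw [ha' 0, h0]
        simp
      · by_cases h1 : (a' 0 : ℕ) = 1
        · refine ⟨ΓX h3 true, gammaX_proper _, fun _ => rfl, ?_⟩
          intro j
          have hj : j = 0 := Subsingleton.elim j 0
          subst hj
          apply Fin.ext
          show (o1 h3).val = (a 0).val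
          rw [ha' 0, h1]
          simp
        · dsimp only at hsome
          rw [if_neg h0, if_neg h1] at hsome
          simp at hsome
  · intro σ τ hpσ hpτ hrσ hrτ hxσ hxτ
    obtain ⟨t₀, hσ⟩ := charX hpσ hrσ
    obtain ⟨t₁, hτ⟩ := charX hpτ hrτ
    have htt : t₀ = t₁ := by
      have e1 := (hσ (.inr .x)).symm.trans (hxσ 0)
      have e2 := (hτ (.inr .x)).symm.trans (hxτ 0)
      rw [← e2] at e1
      cases t₀ <;> cases t₁ <;> simp [ΓX] at e1 ⊢ <;>
        first
          | exact o0_ne_o1 (h3 := h3) e1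
          | exact o0_ne_o1 (h3 := h3) e1.symm
    subst htt
    funext w
    rw [hσ w, hτ w]
  · intro σ hp hrefs hx a' b ha' hb k
    obtain ⟨t, hΓ⟩ := charX hp hrefs
    have hav : (a 0 : ℕ) = if t then 1 else 0 := by
      rw [← hx 0, hΓ (.inr .x)]
      cases t <;> simp [ΓX]
    have hwv : (σ (.inr (.w k)) : ℕ) = if t then 1 else 0 := by
      rw [hΓ (.inr (.w k))]
      cases t <;> simp [ΓX]
    dsimp only at hb
    cases t with
    | false =>
      rw [if_pos (by rw [← ha' 0]; simpa using hav)] at hb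
      have hbe := (Option.some.inj hb).symm
      rw [hbe]
      simpa using hwv
    | true =>
      rw [if_neg (by rw [← ha' 0]; simp [hav]), if_pos (by rw [← ha' 0]; simpa using hav)] at hb
      have hbe := (Option.some.inj hb).symm
      rw [hbe]
      simpa using hwv

end Sim

end S6


/-- There is a constant `c > 0` such that for all `m ≥ 2` and `n ≥ max(m,3)`, each of the
functions `ch_m : S → S^m` (characteristic 0-1 vector of `i`), `ps_m : S^m ⇀ S` (position
of the single 1 in a 0-1 unit vector, undefined elsewhere) and `xp_m : S ⇀ S^m`
(`0 ↦ (0,…,0)`, `1 ↦ (1,…,1)`, undefined elsewhere) can be simulated through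
`n`-colorings by a finite simple graph with at most `c·n²` vertices and `c·n³` edges. -/
theorem statement6 :
    ∃ c : ℕ, 0 < c ∧
      ∀ m n : ℕ, (hm : 2 ≤ m) → max m 3 ≤ n →
        -- ch_m
        (∃ (V : Type) (_ : Fintype V) (G : SimpleGraph V)
            (x : Fin 1 → V) (y : Fin m → V) (r : Fin n → V),
          Simulates G m n
            (fun a : Fin 1 → Fin m => some fun i : Fin m =>
              if (i : ℕ) = (a 0 : ℕ) then (⟨1, by omega⟩ : Fin m) else ⟨0, by omega⟩)
            x y r ∧
          Nat.card V ≤ c * n ^ 2 ∧ Nat.card G.edgeSet ≤ c * n ^ 3) ∧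
        -- ps_m
        (∃ (V : Type) (_ : Fintype V) (G : SimpleGraph V)
            (x : Fin m → V) (y : Fin 1 → V) (r : Fin n → V),
          Simulates G m n
            (fun u : Fin m → Fin m =>
              if h : ∃ i : Fin m, ∀ j : Fin m, (u j : ℕ) = if j = i then 1 else 0 then
                some fun _ : Fin 1 => h.choose
              else none)
            x y r ∧
          Nat.card V ≤ c * n ^ 2 ∧ Nat.card G.edgeSet ≤ c * n ^ 3) ∧
        -- xp_m
        (∃ (V : Type) (_ : Fintype V) (G : SimpleGraph V)
            (x : Fin 1 → V) (y : Fin m → V) (r : Fin n → V),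
          Simulates G m n
            (fun a : Fin 1 → Fin m =>
              if (a 0 : ℕ) = 0 then some fun _ : Fin m => (⟨0, by omega⟩ : Fin m)
              else if (a 0 : ℕ) = 1 then some fun _ : Fin m => (⟨1, by omega⟩ : Fin m)
              else none)
            x y r ∧
          Nat.card V ≤ c * n ^ 2 ∧ Nat.card G.edgeSet ≤ c * n ^ 3) := by

  refine ⟨30, by norm_num, ?_⟩
  intro m n hm hmax
  have h3 : 3 ≤ n := le_trans (le_max_right m 3) hmax
  have hmn : m ≤ n := le_trans (le_max_left m 3) hmax
  have hmm : m * m ≤ n * n := Nat.mul_le_mul hmn hmn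
  have hle1 : n ≤ n * n := Nat.le_mul_of_pos_left n (by omega)
  have hle2 : n * n ≤ n * n * n := Nat.le_mul_of_pos_right (n * n) (by omega)
  letI instD : Fintype (S6.DA m) := S6.DC.fintypeDA hm
  have hcDA : Fintype.card (S6.DA m) ≤ 8 * (m * m) := S6.DC.card_DA hm
  have hVD : Nat.card (Fin n ⊕ S6.DA m) ≤ 30 * n ^ 2 := by
    rw [Nat.card_eq_fintype_card, Fintype.card_sum, Fintype.card_fin, pow_two]
    omega
  have hED : Nat.card (S6.GG (S6.D.nb h3 hmn)).edgeSet ≤ 30 * n ^ 3 := by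
    have h := S6.edge_card_le (S6.D.nb h3 hmn) (n + 2) (fun t => S6.D.nb_card_le h3 hmn t)
    have h2 : Fintype.card (S6.DA m) * (n + 2) ≤ 8 * (m * m) * (n + 2) :=
      Nat.mul_le_mul hcDA (le_refl _)
    have h3' : 8 * (m * m) * (n + 2) ≤ 8 * (n * n) * (n + 2) :=
      Nat.mul_le_mul (Nat.mul_le_mul (le_refl 8) hmm) (le_refl _)
    have h4 : 8 * (n * n) * (n + 2) = 8 * (n * n * n) + 16 * (n * n) := by ring
    rw [show n ^ 3 = n * n * n from by ring]
    omega
  letI instX : Fintype (S6.XA m) := S6.XC.fintypeXA hm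
  have hcXA : Fintype.card (S6.XA m) ≤ 3 * m := S6.XC.card_XA hm
  have hVX : Nat.card (Fin n ⊕ S6.XA m) ≤ 30 * n ^ 2 := by
    rw [Nat.card_eq_fintype_card, Fintype.card_sum, Fintype.card_fin, pow_two]
    omega
  have hEX : Nat.card (S6.GG (S6.X.nbX (m := m) h3)).edgeSet ≤ 30 * n ^ 3 := by
    have h := S6.edge_card_le (S6.X.nbX (m := m) h3) (n + 2) (fun t => S6.X.nbX_card_le t)
    have h2 : Fintype.card (S6.XA m) * (n + 2) ≤ 3 * m * (n + 2) :=
      Nat.mul_le_mul hcXA (le_refl _)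
    have h3' : 3 * m * (n + 2) ≤ 3 * n * (n + 2) :=
      Nat.mul_le_mul (Nat.mul_le_mul (le_refl 3) hmn) (le_refl _)
    have h4 : 3 * n * (n + 2) = 3 * (n * n) + 6 * n := by ring
    rw [show n ^ 3 = n * n * n from by ring]
    omega
  refine ⟨⟨Fin n ⊕ S6.DA m, inferInstance, S6.GG (S6.D.nb h3 hmn),
      fun _ => .inr S6.DA.X, fun i => .inr (S6.DA.b i), Sum.inl, S6.sim_ch hm h3 hmn, hVD, hED⟩,
    ⟨Fin n ⊕ S6.DA m, inferInstance, S6.GG (S6.D.nb h3 hmn),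
      fun j => .inr (S6.DA.b j), fun _ => .inr S6.DA.X, Sum.inl, S6.sim_ps hm h3 hmn, hVD, hED⟩,
    ⟨Fin n ⊕ S6.XA m, inferInstance, S6.GG (S6.X.nbX (m := m) h3),
      fun _ => .inr S6.XA.x, fun k => .inr (S6.XA.w k), Sum.inl, S6.sim_xp hm h3, hVX, hEX⟩⟩
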